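/- Geometric weighted sum limit: for 0 ≤ β < 1, the quantity ((1-β^{n+1})/(1-β))² + 2 Σ_{k=0}^{n-1} β^{n-k} ((1-β^{k+1})/(1-β))² converges to (1+β)/(1-β)³ as n → ∞. -/
import Mathlib


open Filter Finset

lemma geom_weighted_sum_closed (β : ℝ) (hd : (1:ℝ) - β ≠ 0) (n : ℕ) :
    ∑ k ∈ Finset.range n, β ^ (n - k) * ((1 - β ^ (k + 1)) / (1 - β)) ^ 2 =
      (β * (1 - β ^ n) + β ^ (n + 2) * (1 - β ^ n)) / (1 - β) ^ 3
        - 2 * n * β ^ (n + 1) / (1 - β) ^ 2 := by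
  induction n with
  | zero => simp
  | succ n ih =>
    rw [Finset.sum_range_succ]
    have hre : ∀ k ∈ Finset.range n,
        β ^ (n + 1 - k) * ((1 - β ^ (k + 1)) / (1 - β)) ^ 2 =
          β * (β ^ (n - k) * ((1 - β ^ (k + 1)) / (1 - β)) ^ 2) := by
      intro k hk
      rw [Finset.mem_range] at hk
      have : n + 1 - k = (n - k) + 1 := by omega
      rw [this, pow_succ]
      ring
    rw [Finset.sum_congr rfl hre, ← Finset.mul_sum, ih]
    have h1 : n + 1 - n = 1 := by omega
    rw [h1]
    push_cast
    field_simp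
    ring

/-- Geometric weighted sum limit: for `0 ≤ β < 1`,
`((1-β^(n+1))/(1-β))² + 2 ∑_{k=0}^{n-1} β^(n-k) ((1-β^(k+1))/(1-β))²`
converges to `(1+β)/(1-β)³` as `n → ∞`. -/
theorem geometric_weighted_sum_limit (β : ℝ) (hβ0 : 0 ≤ β) (hβ1 : β < 1) :
    Tendsto (fun n : ℕ =>
        ((1 - β ^ (n + 1)) / (1 - β)) ^ 2 +
          2 * ∑ k ∈ Finset.range n, β ^ (n - k) * ((1 - β ^ (k + 1)) / (1 - β)) ^ 2)
      atTop (nhds ((1 + β) / (1 - β) ^ 3)) := by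
  have hd : (1:ℝ) - β ≠ 0 := by linarith
  have h1 : Tendsto (fun n : ℕ => β ^ n) atTop (nhds 0) :=
    tendsto_pow_atTop_nhds_zero_of_lt_one hβ0 hβ1
  have h2 : Tendsto (fun n : ℕ => (n : ℝ) * β ^ n) atTop (nhds 0) :=
    tendsto_self_mul_const_pow_of_lt_one hβ0 hβ1
  have key : Tendsto (fun n : ℕ =>
      ((1 - β * β ^ n) / (1 - β)) ^ 2 +
        2 * ((β * (1 - β ^ n) + β ^ 2 * β ^ n * (1 - β ^ n)) / (1 - β) ^ 3
          - 2 * ((n : ℝ) * β ^ n) * β / (1 - β) ^ 2))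
      atTop (nhds (((1 - β * 0) / (1 - β)) ^ 2 +
        2 * ((β * (1 - 0) + β ^ 2 * 0 * (1 - 0)) / (1 - β) ^ 3
          - 2 * (0 : ℝ) * β / (1 - β) ^ 2))) := by
    apply Tendsto.add
    · exact (((tendsto_const_nhds.sub (h1.const_mul β)).div_const _).pow 2)
    · exact (((((tendsto_const_nhds.sub h1).const_mul β).add
        (((h1.const_mul (β ^ 2)).mul (tendsto_const_nhds.sub h1)))).div_const _).sub
        (((h2.const_mul 2).mul_const β).div_const _)).const_mul 2
  have heq : (fun n : ℕ =>
      ((1 - β * β ^ n) / (1 - β)) ^ 2 +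
        2 * ((β * (1 - β ^ n) + β ^ 2 * β ^ n * (1 - β ^ n)) / (1 - β) ^ 3
          - 2 * ((n : ℝ) * β ^ n) * β / (1 - β) ^ 2)) =
      (fun n : ℕ =>
        ((1 - β ^ (n + 1)) / (1 - β)) ^ 2 +
          2 * ∑ k ∈ Finset.range n, β ^ (n - k) * ((1 - β ^ (k + 1)) / (1 - β)) ^ 2) := by
    funext n
    rw [geom_weighted_sum_closed β hd n]
    ring
  rw [heq] at key
  convert key using 2
  field_simp
  ring
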